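/- (Theorem 3, measure-theoretic form.) Let (Ω, 𝔽, μ) be a finite measure space, F ∈ 𝔽 a measurable set (the feasible states), g : Ω → [0,∞) measurable (the minimum short-term relay power), and c > 0. Set D = F ∩ {ω : g(ω) ≤ c}. Then for every measurable P : Ω → [0,∞) satisfying μ(F ∩ {ω : P(ω) ≥ g(ω)}) ≥ μ(D), one has ∫_F P dμ ≥ ∫_D g dμ. Equivalently, among all relay power policies achieving at least the non-outage probability of the truncated policy P**(ω) = g(ω)·1{g(ω) ≤ c}, the truncated policy has minimal average power. -/

import Mathlib

open MeasureTheory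

/-- Theorem 3 (measure-theoretic form): among all relay power policies `P ≥ 0`
achieving at least the non-outage probability `μ(D)` of the truncated policy, where
`D = F ∩ {g ≤ c}`, the truncated policy has minimal average power:
`∫_F P dμ ≥ ∫_D g dμ`. -/
theorem truncated_policy_minimizes_power
    {Ω : Type*} [MeasurableSpace Ω] (μ : Measure Ω) [IsFiniteMeasure μ]
    (F : Set Ω) (hF : MeasurableSet F)
    (g : Ω → ℝ) (hgm : Measurable g) (hg : ∀ ω, 0 ≤ g ω)
    (c : ℝ) (hc : 0 < c)
    (D : Set Ω) (hD : D = F ∩ {ω | g ω ≤ c}) :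
    ∀ P : Ω → ℝ, Measurable P → (∀ ω, 0 ≤ P ω) →
      μ (F ∩ {ω | P ω ≥ g ω}) ≥ μ D →
      (∫⁻ ω in F, ENNReal.ofReal (P ω) ∂μ) ≥ ∫⁻ ω in D, ENNReal.ofReal (g ω) ∂μ := by
  intro P hPm hP hμ
  set A : Set Ω := F ∩ {ω | P ω ≥ g ω} with hAdef
  have hDm : MeasurableSet D := by
    rw [hD]; exact hF.inter (measurableSet_le hgm measurable_const)
  have hAm : MeasurableSet A := hF.inter (measurableSet_le hgm hPm)
  -- measure inequality μ(D \ A) ≤ μ(A \ D)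
  have hDA : μ (D \ A) ≤ μ (A \ D) := by
    have h1 : μ (D ∩ A) + μ (D \ A) = μ D := measure_inter_add_diff D hAm
    have h2 : μ (A ∩ D) + μ (A \ D) = μ A := measure_inter_add_diff A hDm
    have hcm : μ (D ∩ A) = μ (A ∩ D) := by rw [Set.inter_comm]
    have key : μ (D ∩ A) + μ (D \ A) ≤ μ (D ∩ A) + μ (A \ D) := by
      rw [h1, hcm, h2]; exact hμ
    exact (ENNReal.add_le_add_iff_left (measure_ne_top μ _)).mp key
  -- split ∫_D g
  have hsplit : (∫⁻ ω in D, ENNReal.ofReal (g ω) ∂μ)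
      = (∫⁻ ω in D ∩ A, ENNReal.ofReal (g ω) ∂μ)
        + ∫⁻ ω in D \ A, ENNReal.ofReal (g ω) ∂μ :=
    (lintegral_inter_add_diff _ D hAm).symm
  -- on D ∩ A, g ≤ P
  have h1 : (∫⁻ ω in D ∩ A, ENNReal.ofReal (g ω) ∂μ)
      ≤ ∫⁻ ω in D ∩ A, ENNReal.ofReal (P ω) ∂μ := by
    refine setLIntegral_mono' (hDm.inter hAm) fun ω hω => ?_
    exact ENNReal.ofReal_le_ofReal hω.2.2
  -- on D \ A, g ≤ c
  have h2 : (∫⁻ ω in D \ A, ENNReal.ofReal (g ω) ∂μ)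
      ≤ ENNReal.ofReal c * μ (D \ A) := by
    rw [← setLIntegral_const]
    refine setLIntegral_mono' (hDm.diff hAm) fun ω hω => ?_
    have : g ω ≤ c := by
      have := hω.1; rw [hD] at this; exact this.2
    exact ENNReal.ofReal_le_ofReal this
  -- on A \ D, c ≤ P
  have h3 : ENNReal.ofReal c * μ (A \ D) ≤ ∫⁻ ω in A \ D, ENNReal.ofReal (P ω) ∂μ := by
    rw [← setLIntegral_const]
    refine setLIntegral_mono' (hAm.diff hDm) fun ω hω => ?_
    have hgc : c < g ω := by
      by_contra h
      push_neg at h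
      exact hω.2 (by rw [hD]; exact ⟨hω.1.1, h⟩)
    exact ENNReal.ofReal_le_ofReal (hgc.le.trans hω.1.2)
  -- combine subsets of F
  have h4 : (∫⁻ ω in D ∩ A, ENNReal.ofReal (P ω) ∂μ)
      + (∫⁻ ω in A \ D, ENNReal.ofReal (P ω) ∂μ)
      ≤ ∫⁻ ω in F, ENNReal.ofReal (P ω) ∂μ := by
    rw [← lintegral_union (hAm.diff hDm)
      (Set.disjoint_left.mpr fun ω hω h' => h'.2 hω.1)]
    refine lintegral_mono_set ?_
    intro ω hω
    rcases hω with h | h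
    · exact h.2.1
    · exact h.1.1
  calc ∫⁻ ω in D, ENNReal.ofReal (g ω) ∂μ
      = (∫⁻ ω in D ∩ A, ENNReal.ofReal (g ω) ∂μ)
        + ∫⁻ ω in D \ A, ENNReal.ofReal (g ω) ∂μ := hsplit
    _ ≤ (∫⁻ ω in D ∩ A, ENNReal.ofReal (P ω) ∂μ) + ENNReal.ofReal c * μ (D \ A) :=
        add_le_add h1 h2
    _ ≤ (∫⁻ ω in D ∩ A, ENNReal.ofReal (P ω) ∂μ) + ENNReal.ofReal c * μ (A \ D) :=
        add_le_add_right (mul_le_mul_right hDA _) _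
    _ ≤ (∫⁻ ω in D ∩ A, ENNReal.ofReal (P ω) ∂μ)
        + ∫⁻ ω in A \ D, ENNReal.ofReal (P ω) ∂μ := add_le_add_right h3 _
    _ ≤ ∫⁻ ω in F, ENNReal.ofReal (P ω) ∂μ := h4
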